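/- For all n ≥ 0, ∑_{π} q^{inv(π)} = (1 + q)^n, where the sum runs over all permutations π of {1, …, n+1} satisfying −1 ≤ π(i) − i ≤ n for all i (that is, pB_{n,1}(q) = (1+q)^n). -/

import Mathlib

open Finset Polynomial

attribute [local instance] Classical.propDecidable

/-- A Vesztergombi permutation with `k = 1`: a permutation `π` of `{1, …, n+1}`
(modelled on `Fin (n+1)`) with `-1 ≤ π(i) - i ≤ n` for all `i`. -/
def IsVesztergombiOne (n : ℕ) (π : Equiv.Perm (Fin (n + 1))) : Prop :=
  ∀ i, -(1 : ℤ) ≤ (π i : ℤ) - (i : ℤ) ∧ (π i : ℤ) - (i : ℤ) ≤ (n : ℤ)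

/-- The number of inversions of a permutation: pairs `i < j` with `π(i) > π(j)`. -/
def inversions {N : ℕ} (π : Equiv.Perm (Fin N)) : ℕ :=
  ((Finset.univ ×ˢ Finset.univ).filter
    (fun p : Fin N × Fin N => p.1 < p.2 ∧ π p.2 < π p.1)).card

namespace VZaux

open Equiv

lemma vesz_iff {m : ℕ} (π : Equiv.Perm (Fin (m + 1))) :
    IsVesztergombiOne m π ↔ ∀ i : Fin (m + 1), (i : ℕ) ≤ (π i : ℕ) + 1 := by
  unfold IsVesztergombiOne
  constructor
  · intro h i
    have := (h i).1
    omega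
  · intro h i
    have h1 := h i
    have h2 : (π i : ℕ) ≤ m := Nat.lt_succ_iff.mp (π i).isLt
    have h3 : (i : ℕ) ≤ m := Nat.lt_succ_iff.mp i.isLt
    constructor <;> omega

variable {n : ℕ}

/-- Extend a permutation of `Fin (n+1)` to one of `Fin (n+2)` fixing `0`. -/
def Φ (σ : Equiv.Perm (Fin (n + 1))) : Equiv.Perm (Fin (n + 2)) :=
  Equiv.Perm.decomposeFin.symm (0, σ)

@[simp] lemma Φ_zero (σ : Equiv.Perm (Fin (n + 1))) : Φ σ 0 = 0 := by simp [Φ]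

@[simp] lemma Φ_succ (σ : Equiv.Perm (Fin (n + 1))) (i : Fin (n + 1)) :
    Φ σ i.succ = (σ i).succ := by simp [Φ]

def Ψ (π : Equiv.Perm (Fin (n + 2))) : Equiv.Perm (Fin (n + 1)) :=
  (Equiv.Perm.decomposeFin π).2

@[simp] lemma ΨΦ (σ : Equiv.Perm (Fin (n + 1))) : Ψ (Φ σ) = σ := by
  simp [Ψ, Φ]

lemma ΦΨ (π : Equiv.Perm (Fin (n + 2))) (h : π 0 = 0) : Φ (Ψ π) = π := by
  rcases hpe : Equiv.Perm.decomposeFin π with ⟨p, e⟩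
  have hπ : π = Equiv.Perm.decomposeFin.symm (p, e) := by
    rw [← hpe]
    exact (Equiv.Perm.decomposeFin.symm_apply_apply π).symm
  have hp : p = 0 := by rw [hπ] at h; simpa using h
  rw [Ψ, hpe, hπ, hp]
  rfl

lemma vesz_Φ (σ : Equiv.Perm (Fin (n + 1))) :
    IsVesztergombiOne (n + 1) (Φ σ) ↔ IsVesztergombiOne n σ := by
  rw [vesz_iff, vesz_iff]
  constructor
  · intro h i
    have := h i.succ
    rw [Φ_succ] at this
    simpa [Fin.val_succ] using this
  · intro h i
    induction i using Fin.cases with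
    | zero => simp
    | succ i =>
      have := h i
      rw [Φ_succ]
      simpa [Fin.val_succ] using this

/-- The "case B" permutation: `Φ σ` composed with the swap of `0` and `1`. -/
def τ (σ : Equiv.Perm (Fin (n + 1))) : Equiv.Perm (Fin (n + 2)) :=
  Φ σ * Equiv.swap 0 1

@[simp] lemma τ_zero (σ : Equiv.Perm (Fin (n + 1))) : τ σ 0 = (σ 0).succ := by
  rw [τ, Equiv.Perm.mul_apply, Equiv.swap_apply_left, ← Fin.succ_zero_eq_one, Φ_succ]

@[simp] lemma τ_one (σ : Equiv.Perm (Fin (n + 1))) : τ σ 1 = 0 := by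
  rw [τ, Equiv.Perm.mul_apply, Equiv.swap_apply_right, Φ_zero]

lemma succ_ne_one {i : Fin (n + 1)} (h : i ≠ 0) : (i.succ : Fin (n + 2)) ≠ 1 := by
  rw [← Fin.succ_zero_eq_one]
  exact fun e => h (Fin.succ_injective _ e)

lemma τ_succ (σ : Equiv.Perm (Fin (n + 1))) {i : Fin (n + 1)} (h : i ≠ 0) :
    τ σ i.succ = (σ i).succ := by
  rw [τ, Equiv.Perm.mul_apply,
    Equiv.swap_apply_of_ne_of_ne (Fin.succ_ne_zero i) (succ_ne_one h), Φ_succ]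

lemma vesz_τ (σ : Equiv.Perm (Fin (n + 1))) :
    IsVesztergombiOne (n + 1) (τ σ) ↔ IsVesztergombiOne n σ := by
  rw [vesz_iff, vesz_iff]
  constructor
  · intro h i
    by_cases hi : i = 0
    · subst hi; simp
    · have := h i.succ
      rw [τ_succ σ hi] at this
      simpa [Fin.val_succ] using this
  · intro h i
    induction i using Fin.cases with
    | zero => simp
    | succ i =>
      by_cases hi : i = 0
      · subst hi
        rw [Fin.succ_zero_eq_one, τ_one]
        simp [Fin.val_one]
      · have := h i
        rw [τ_succ σ hi]
        simpa [Fin.val_succ] using this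

/-- If `π` is Vesztergombi and `π 0 ≠ 0` then `π 1 = 0`. -/
lemma one_to_zero {π : Equiv.Perm (Fin (n + 2))}
    (h : IsVesztergombiOne (n + 1) π) (h0 : π 0 ≠ 0) : π 1 = 0 := by
  set m := π⁻¹ 0 with hm_def
  have hm : π m = 0 := Equiv.apply_symm_apply π 0
  have hle := (vesz_iff π).mp h m
  rw [hm] at hle
  have hm0 : m ≠ 0 := fun e => h0 (by rw [← e] at hm ⊢; exact hm)
  have hmv : (m : ℕ) ≠ 0 := fun e => hm0 (Fin.ext (by simpa using e))
  have : m = 1 := by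
    apply Fin.ext
    rw [Fin.val_one]
    simp at hle
    omega
  rw [← this, hm]

/-! ### Inversions -/

def invSet {N : ℕ} (π : Equiv.Perm (Fin N)) : Finset (Fin N × Fin N) :=
  ((Finset.univ ×ˢ Finset.univ).filter
    (fun p : Fin N × Fin N => p.1 < p.2 ∧ π p.2 < π p.1))

lemma inversions_eq {N : ℕ} (π : Equiv.Perm (Fin N)) : inversions π = (invSet π).card := rfl

lemma mem_invSet {N : ℕ} (π : Equiv.Perm (Fin N)) (p : Fin N × Fin N) :
    p ∈ invSet π ↔ p.1 < p.2 ∧ π p.2 < π p.1 := by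
  simp [invSet]

lemma inv_Φ (σ : Equiv.Perm (Fin (n + 1))) : inversions (Φ σ) = inversions σ := by
  rw [inversions_eq, inversions_eq]
  symm
  apply Finset.card_bij (fun p _ => (p.1.succ, p.2.succ))
  · rintro ⟨a, b⟩ hp
    rw [mem_invSet] at hp ⊢
    simpa [Fin.succ_lt_succ_iff] using hp
  · rintro ⟨a₁, b₁⟩ h₁ ⟨a₂, b₂⟩ h₂ he
    simp only [Prod.mk.injEq] at he
    exact Prod.ext (Fin.succ_injective _ he.1) (Fin.succ_injective _ he.2)
  · rintro ⟨i, j⟩ hp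
    rw [mem_invSet] at hp
    obtain ⟨hij, hlt⟩ := hp
    have hi0 : i ≠ 0 := by
      rintro rfl
      rw [Φ_zero] at hlt
      exact Fin.not_lt_zero _ hlt
    have hj0 : j ≠ 0 := by
      rintro rfl
      exact Fin.not_lt_zero _ hij
    obtain ⟨a, rfl⟩ := Fin.eq_succ_of_ne_zero hi0
    obtain ⟨b, rfl⟩ := Fin.eq_succ_of_ne_zero hj0
    refine ⟨(a, b), ?_, rfl⟩
    rw [mem_invSet]
    rw [Φ_succ, Φ_succ] at hlt
    exact ⟨Fin.succ_lt_succ_iff.mp hij, Fin.succ_lt_succ_iff.mp hlt⟩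

lemma invSet_τ (σ : Equiv.Perm (Fin (n + 1))) :
    invSet (τ σ) = insert ((0 : Fin (n + 2)), (1 : Fin (n + 2)))
      ((invSet σ).image
        (fun p => (Equiv.swap (0 : Fin (n + 2)) 1 p.1.succ, p.2.succ))) := by
  ext ⟨i, j⟩
  rw [mem_invSet, Finset.mem_insert, Finset.mem_image]
  constructor
  · rintro ⟨hij, hlt⟩
    have hi1 : i ≠ 1 := by
      rintro rfl
      rw [τ_one] at hlt
      exact Fin.not_lt_zero _ hlt
    have hj0 : j ≠ 0 := by
      rintro rfl
      exact Fin.not_lt_zero _ hij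
    obtain ⟨b, rfl⟩ := Fin.eq_succ_of_ne_zero hj0
    by_cases hi0 : i = 0
    · subst hi0
      by_cases hb0 : b = 0
      · subst hb0
        left
        rw [Fin.succ_zero_eq_one]
      · right
        refine ⟨(0, b), ?_, ?_⟩
        · rw [mem_invSet]
          refine ⟨Fin.pos_iff_ne_zero.mpr hb0, ?_⟩
          rw [τ_succ σ hb0, τ_zero] at hlt
          exact Fin.succ_lt_succ_iff.mp hlt
        · simp [Fin.succ_zero_eq_one, Equiv.swap_apply_right]
    · have hi0' : i ≠ 0 := hi0
      obtain ⟨a, rfl⟩ := Fin.eq_succ_of_ne_zero hi0'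
      have ha0 : a ≠ 0 := by
        rintro rfl
        exact hi1 (Fin.succ_zero_eq_one)
      have hb0 : b ≠ 0 := by
        rintro rfl
        have : a < 0 := Fin.succ_lt_succ_iff.mp hij
        exact Fin.not_lt_zero _ this
      right
      refine ⟨(a, b), ?_, ?_⟩
      · rw [mem_invSet]
        refine ⟨Fin.succ_lt_succ_iff.mp hij, ?_⟩
        rw [τ_succ σ hb0, τ_succ σ ha0] at hlt
        exact Fin.succ_lt_succ_iff.mp hlt
      · simp [Equiv.swap_apply_of_ne_of_ne (Fin.succ_ne_zero a) (succ_ne_one ha0)]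
  · rintro (heq | ⟨⟨a, b⟩, hab, heq⟩)
    · rw [Prod.mk.injEq] at heq
      obtain ⟨rfl, rfl⟩ := heq
      refine ⟨?_, ?_⟩
      · rw [← Fin.succ_zero_eq_one]
        exact Fin.succ_pos _
      · rw [τ_one, τ_zero]
        exact Fin.succ_pos _
    · rw [Prod.mk.injEq] at heq
      obtain ⟨rfl, rfl⟩ := heq
      rw [mem_invSet] at hab
      obtain ⟨hab1, hab2⟩ := hab
      have hb0 : b ≠ 0 := by
        rintro rfl
        exact Fin.not_lt_zero _ hab1
      by_cases ha : a = 0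
      · subst ha
        rw [Fin.succ_zero_eq_one, Equiv.swap_apply_right]
        exact ⟨Fin.succ_pos _, by
          rw [τ_succ σ hb0, τ_zero]
          exact Fin.succ_lt_succ_iff.mpr hab2⟩
      · rw [Equiv.swap_apply_of_ne_of_ne (Fin.succ_ne_zero a) (succ_ne_one ha)]
        exact ⟨Fin.succ_lt_succ_iff.mpr hab1, by
          rw [τ_succ σ hb0, τ_succ σ ha]
          exact Fin.succ_lt_succ_iff.mpr hab2⟩

lemma inv_τ (σ : Equiv.Perm (Fin (n + 1))) : inversions (τ σ) = inversions σ + 1 := by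
  have hinj : Function.Injective
      (fun p : Fin (n + 1) × Fin (n + 1) =>
        (Equiv.swap (0 : Fin (n + 2)) 1 p.1.succ, p.2.succ)) := by
    rintro ⟨a, b⟩ ⟨c, d⟩ h
    rw [Prod.mk.injEq] at h
    exact Prod.ext (Fin.succ_injective _ ((Equiv.swap _ _).injective h.1))
      (Fin.succ_injective _ h.2)
  have hnot : ((0 : Fin (n + 2)), (1 : Fin (n + 2))) ∉
      (invSet σ).image
        (fun p => (Equiv.swap (0 : Fin (n + 2)) 1 p.1.succ, p.2.succ)) := by
    intro hmem
    rw [Finset.mem_image] at hmem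
    obtain ⟨⟨a, b⟩, hab, heq⟩ := hmem
    rw [Prod.mk.injEq] at heq
    have h2 := heq.2
    rw [← Fin.succ_zero_eq_one] at h2
    have hb := Fin.succ_injective _ h2
    subst hb
    rw [mem_invSet] at hab
    exact Fin.not_lt_zero _ hab.1
  rw [inversions_eq, inversions_eq, invSet_τ, Finset.card_insert_of_notMem hnot,
    Finset.card_image_of_injective _ hinj]

lemma sumA :
    (∑ π ∈ (Finset.univ.filter
          (fun π : Equiv.Perm (Fin (n + 2)) => IsVesztergombiOne (n + 1) π)).filter
          (fun π => π 0 = 0),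
        (Polynomial.X : Polynomial ℚ) ^ inversions π)
      = ∑ σ ∈ Finset.univ.filter (fun σ : Equiv.Perm (Fin (n + 1)) => IsVesztergombiOne n σ),
        (Polynomial.X : Polynomial ℚ) ^ inversions σ := by
  symm
  refine Finset.sum_bij' (fun σ _ => Φ σ) (fun π _ => Ψ π) ?hi ?hj ?left ?right ?h
  case hi =>
    intro σ hσ
    rw [Finset.mem_filter] at hσ
    rw [Finset.mem_filter, Finset.mem_filter]
    exact ⟨⟨Finset.mem_univ _, (vesz_Φ σ).mpr hσ.2⟩, Φ_zero σ⟩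
  case hj =>
    intro π hπ
    rw [Finset.mem_filter, Finset.mem_filter] at hπ
    obtain ⟨⟨-, hv⟩, h0⟩ := hπ
    rw [Finset.mem_filter]
    refine ⟨Finset.mem_univ _, ?_⟩
    rw [← vesz_Φ, ΦΨ π h0]
    exact hv
  case left =>
    intro σ _
    exact ΨΦ σ
  case right =>
    intro π hπ
    rw [Finset.mem_filter, Finset.mem_filter] at hπ
    exact ΦΨ π hπ.2
  case h =>
    intro σ _
    rw [inv_Φ]

lemma sumB :
    (∑ π ∈ (Finset.univ.filter
          (fun π : Equiv.Perm (Fin (n + 2)) => IsVesztergombiOne (n + 1) π)).filter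
          (fun π => ¬π 0 = 0),
        (Polynomial.X : Polynomial ℚ) ^ inversions π)
      = ∑ σ ∈ Finset.univ.filter (fun σ : Equiv.Perm (Fin (n + 1)) => IsVesztergombiOne n σ),
        (Polynomial.X : Polynomial ℚ) ^ (inversions σ + 1) := by
  symm
  refine Finset.sum_bij' (fun σ _ => τ σ) (fun π _ => Ψ (π * Equiv.swap 0 1))
    ?hi ?hj ?left ?right ?h
  case hi =>
    intro σ hσ
    rw [Finset.mem_filter] at hσ
    rw [Finset.mem_filter, Finset.mem_filter]
    refine ⟨⟨Finset.mem_univ _, (vesz_τ σ).mpr hσ.2⟩, ?_⟩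
    rw [τ_zero]
    exact Fin.succ_ne_zero _
  case hj =>
    intro π hπ
    rw [Finset.mem_filter, Finset.mem_filter] at hπ
    obtain ⟨⟨-, hv⟩, h0⟩ := hπ
    have h1 : π 1 = 0 := one_to_zero hv h0
    have hs0 : (π * Equiv.swap (0 : Fin (n + 2)) 1) 0 = 0 := by
      rw [Equiv.Perm.mul_apply, Equiv.swap_apply_left, h1]
    have hτ : τ (Ψ (π * Equiv.swap (0 : Fin (n + 2)) 1)) = π := by
      rw [τ, ΦΨ _ hs0, mul_assoc, Equiv.swap_mul_self, mul_one]
    rw [Finset.mem_filter]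
    refine ⟨Finset.mem_univ _, ?_⟩
    rw [← vesz_τ, hτ]
    exact hv
  case left =>
    intro σ _
    simp only [τ]
    rw [mul_assoc, Equiv.swap_mul_self, mul_one, ΨΦ]
  case right =>
    intro π hπ
    rw [Finset.mem_filter, Finset.mem_filter] at hπ
    obtain ⟨⟨-, hv⟩, h0⟩ := hπ
    have h1 : π 1 = 0 := one_to_zero hv h0
    have hs0 : (π * Equiv.swap (0 : Fin (n + 2)) 1) 0 = 0 := by
      rw [Equiv.Perm.mul_apply, Equiv.swap_apply_left, h1]
    simp only [τ]
    rw [ΦΨ _ hs0, mul_assoc, Equiv.swap_mul_self, mul_one]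
  case h =>
    intro σ _
    rw [inv_τ]

end VZaux

open VZaux

/-- `pB_{n,1}(q) = ∑_{π ∈ V_n^1} q^{inv(π)} = (1+q)^n`, as polynomials in `q`. -/
theorem pB_n_one (n : ℕ) :
    (∑ π ∈ Finset.univ.filter (fun π : Equiv.Perm (Fin (n + 1)) => IsVesztergombiOne n π),
        (Polynomial.X : Polynomial ℚ) ^ inversions π)
      = (1 + Polynomial.X : Polynomial ℚ) ^ n := by
  induction n with
  | zero =>
    have h1 : ∀ π : Equiv.Perm (Fin 1), π = 1 := fun π =>
      Equiv.ext fun i => Subsingleton.elim _ _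
    have hv1 : IsVesztergombiOne 0 (1 : Equiv.Perm (Fin 1)) := by
      rw [vesz_iff]
      intro i
      simp
    have hf : Finset.univ.filter (fun π : Equiv.Perm (Fin 1) => IsVesztergombiOne 0 π)
        = {1} := by
      ext π
      rw [Finset.mem_filter, Finset.mem_singleton, h1 π]
      simpa using hv1
    have hi0 : inversions (1 : Equiv.Perm (Fin 1)) = 0 := by
      rw [inversions_eq, Finset.card_eq_zero, Finset.eq_empty_iff_forall_notMem]
      intro p hp
      rw [mem_invSet] at hp
      exact absurd hp.2 (by simp [lt_asymm hp.1])
    rw [hf, Finset.sum_singleton, hi0, pow_zero, pow_zero]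
  | succ n ih =>
    have hsplit := Finset.sum_filter_add_sum_filter_not
      (Finset.univ.filter
        (fun π : Equiv.Perm (Fin (n + 2)) => IsVesztergombiOne (n + 1) π))
      (fun π => π 0 = 0) (fun π => (Polynomial.X : Polynomial ℚ) ^ inversions π)
    rw [← hsplit, sumA, sumB]
    have hx : ∀ σ ∈ Finset.univ.filter
        (fun σ : Equiv.Perm (Fin (n + 1)) => IsVesztergombiOne n σ),
        (Polynomial.X : Polynomial ℚ) ^ (inversions σ + 1)
          = (Polynomial.X : Polynomial ℚ) ^ inversions σ * Polynomial.X := fun σ _ =>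
      pow_succ _ _
    rw [Finset.sum_congr rfl hx, ← Finset.sum_mul, ih]
    ring
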